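/- Fix ρ ∈ (0,1). For k ≥ 1 and N = M^k, let X = X_ρ := {c + m mod N : c ∈ C_k, m ∈ ℤ, |m| ≤ 2N^{1−ρ}} ⊆ Z_N, and let T := 1_X ∘ F_N ∘ 1_X be the operator on ℓ²(Z_N) obtained by composing multiplication by the indicator of X, the discrete Fourier transform F_N, and multiplication by the indicator of X. Then there is a constant C > 0, independent of k, such that tr((T*T)²) ≤ C·N^{4(1−ρ)}·t_k for all k ≥ 1. -/

import Mathlib

open scoped BigOperators
open Matrix

/-- Entry of the unitary discrete Fourier transform on `ℓ²(Z_N)`. -/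
noncomputable def dftEnt (N j l : ℕ) : ℂ :=
  ((1 : ℝ) / Real.sqrt N : ℝ) * Complex.exp (-(2 * (Real.pi : ℂ) * Complex.I * j * l) / N)

/-- The unitary discrete Fourier transform as an `N × N` matrix. -/
noncomputable def dftM (N : ℕ) : Matrix (Fin N) (Fin N) ℂ :=
  Matrix.of fun j l => dftEnt N j.val l.val

/-- The Cantor iterates `C_k = {Σ_{j<k} a_j M^j : a_j ∈ A} ⊆ {0,…,M^k-1}`. -/
def Ck (M : ℕ) (A : Finset ℕ) (k : ℕ) : Finset ℕ :=
  (Fintype.piFinset fun _ : Fin k => A).image fun a => ∑ j : Fin k, a j * M ^ (j : ℕ)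

/-- The discrete Fourier transform of the indicator function of `S ⊆ Z_N`. -/
noncomputable def dftInd (N : ℕ) (S : Finset ℕ) (m : ℕ) : ℂ :=
  ((1 : ℝ) / Real.sqrt N : ℝ) * ∑ l ∈ Finset.range N,
    (if l ∈ S then (1 : ℂ) else 0) * Complex.exp (-(2 * (Real.pi : ℂ) * Complex.I * m * l) / N)

/-- `t_k = (1/N) Σ_{j,ℓ ∈ Z_N} 1_{C_k}(j) 1_{C_k}(ℓ) |F_N(1_{C_k})(ℓ-j)|²`, `N = M^k`. -/
noncomputable def tk (M : ℕ) (A : Finset ℕ) (k : ℕ) : ℝ :=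
  ((1 : ℝ) / ((M ^ k : ℕ) : ℝ)) * ∑ j ∈ Finset.range (M ^ k), ∑ l ∈ Finset.range (M ^ k),
    (if j ∈ Ck M A k then (1 : ℝ) else 0) * (if l ∈ Ck M A k then (1 : ℝ) else 0) *
      ‖dftInd (M ^ k) (Ck M A k) (l + M ^ k - j)‖ ^ 2

/-- `X = X_ρ = {c + m mod N : c ∈ C_k, m ∈ ℤ, |m| ≤ 2 N^{1-ρ}} ⊆ Z_N`, `N = M^k`. -/
def Xrho (M : ℕ) (A : Finset ℕ) (ρ : ℝ) (k : ℕ) : Set (Fin (M ^ k)) :=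
  {x | ∃ c ∈ Ck M A k, ∃ m : ℤ, |(m : ℝ)| ≤ 2 * ((M ^ k : ℕ) : ℝ) ^ (1 - ρ) ∧
    (x.val : ℤ) ≡ (c : ℤ) + m [ZMOD ((M ^ k : ℕ) : ℤ)]}

/-- The operator `T = 1_X ∘ F_N ∘ 1_X` on `ℓ²(Z_N)`, with `X = X_ρ`. -/
noncomputable def Topk (M : ℕ) (A : Finset ℕ) (ρ : ℝ) (k : ℕ) :
    Matrix (Fin (M ^ k)) (Fin (M ^ k)) ℂ :=
  Matrix.diagonal ((Xrho M A ρ k).indicator fun _ => (1 : ℂ)) * dftM (M ^ k) *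
    Matrix.diagonal ((Xrho M A ρ k).indicator fun _ => (1 : ℂ))

noncomputable def eN (N : ℕ) (n : ℤ) : ℂ := Complex.exp (2 * Real.pi * Complex.I * n / N)

lemma eN_add (N : ℕ) (a b : ℤ) : eN N (a + b) = eN N a * eN N b := by
  rw [eN, eN, eN, ← Complex.exp_add]; congr 1; push_cast; ring

lemma eN_zero (N : ℕ) : eN N 0 = 1 := by simp [eN]

lemma eN_norm (N : ℕ) (a : ℤ) : ‖eN N a‖ = 1 := by
  rw [eN]
  rw [Complex.norm_exp]
  have : (2 * (Real.pi:ℂ) * Complex.I * a / N).re = 0 := by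
    simp [Complex.div_re, Complex.mul_re, Complex.mul_im]
  rw [this, Real.exp_zero]

lemma eN_int_mul (N : ℕ) (hN : 0 < N) (t : ℤ) : eN N (N * t) = 1 := by
  rw [eN]
  have hNne : (N:ℂ) ≠ 0 := Nat.cast_ne_zero.mpr hN.ne'
  have : 2 * (Real.pi:ℂ) * Complex.I * ((N:ℤ) * t : ℤ) / N = t * (2 * Real.pi * Complex.I) := by
    push_cast
    field_simp
  rw [this, Complex.exp_int_mul_two_pi_mul_I]

lemma eN_congr (N : ℕ) (hN : 0 < N) {a b : ℤ} (h : a ≡ b [ZMOD (N:ℤ)]) :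
    eN N a = eN N b := by
  obtain ⟨t, ht⟩ := h.dvd
  have hb : b = a + N * t := by linarith [ht]
  rw [hb, eN_add, eN_int_mul N hN, mul_one]

lemma eN_conj (N : ℕ) (a : ℤ) : (starRingEnd ℂ) (eN N a) = eN N (-a) := by
  rw [eN, eN, ← Complex.exp_conj]
  congr 1
  simp only [map_div₀, _root_.map_mul, Complex.conj_I, Complex.conj_ofReal, map_ofNat,
    map_intCast, map_natCast]
  push_cast
  ring

noncomputable def GG (N : ℕ) (χ : Fin N → ℝ) (m : ℤ) : ℂ :=
  ∑ x : Fin N, (χ x : ℂ) * eN N (m * (x : ℤ))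

noncomputable def Phi (N : ℕ) (χ : Fin N → ℝ) (m : ℤ) : ℝ := Complex.normSq (GG N χ m)

lemma Phi_nonneg (N : ℕ) (χ : Fin N → ℝ) (m : ℤ) : 0 ≤ Phi N χ m :=
  Complex.normSq_nonneg _

lemma GG_congr (N : ℕ) (hN : 0 < N) (χ : Fin N → ℝ) {a b : ℤ} (h : a ≡ b [ZMOD (N:ℤ)]) :
    GG N χ a = GG N χ b := by
  unfold GG
  refine Finset.sum_congr rfl fun x _ => ?_
  rw [eN_congr N hN (Int.ModEq.mul_right _ h)]

lemma Phi_congr (N : ℕ) (hN : 0 < N) (χ : Fin N → ℝ) {a b : ℤ} (h : a ≡ b [ZMOD (N:ℤ)]) :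
    Phi N χ a = Phi N χ b := by
  unfold Phi; rw [GG_congr N hN χ h]

lemma GG_neg (N : ℕ) (χ : Fin N → ℝ) (m : ℤ) :
    GG N χ (-m) = (starRingEnd ℂ) (GG N χ m) := by
  unfold GG
  rw [_root_.map_sum]
  refine Finset.sum_congr rfl fun x _ => ?_
  rw [_root_.map_mul, Complex.conj_ofReal, eN_conj]
  ring_nf

lemma Phi_expand (N : ℕ) (χ : Fin N → ℝ) (m : ℤ) :
    (Phi N χ m : ℂ) = ∑ x : Fin N, ∑ y : Fin N,
      (χ x : ℂ) * (χ y : ℂ) * eN N (m * ((x : ℤ) - (y : ℤ))) := by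
  have h1 : (Phi N χ m : ℂ) = GG N χ m * (starRingEnd ℂ) (GG N χ m) := by
    rw [Complex.mul_conj]; norm_cast
  rw [h1, ← GG_neg]
  unfold GG
  rw [Finset.sum_mul_sum]
  refine Finset.sum_congr rfl fun x _ => Finset.sum_congr rfl fun y _ => ?_
  have : m * ((x:ℤ) - y) = m * x + (-m) * y := by ring
  rw [this, eN_add]
  ring

noncomputable def GC (N : ℕ) (C : Finset ℕ) (m : ℤ) : ℂ := ∑ c ∈ C, eN N (m * (c : ℤ))

noncomputable def PhiC (N : ℕ) (C : Finset ℕ) (m : ℤ) : ℝ := Complex.normSq (GC N C m)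

lemma PhiC_nonneg (N : ℕ) (C : Finset ℕ) (m : ℤ) : 0 ≤ PhiC N C m :=
  Complex.normSq_nonneg _

lemma GC_congr (N : ℕ) (hN : 0 < N) (C : Finset ℕ) {a b : ℤ} (h : a ≡ b [ZMOD (N:ℤ)]) :
    GC N C a = GC N C b := by
  unfold GC
  refine Finset.sum_congr rfl fun x _ => ?_
  rw [eN_congr N hN (Int.ModEq.mul_right _ h)]

lemma PhiC_congr (N : ℕ) (hN : 0 < N) (C : Finset ℕ) {a b : ℤ} (h : a ≡ b [ZMOD (N:ℤ)]) :
    PhiC N C a = PhiC N C b := by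
  unfold PhiC; rw [GC_congr N hN C h]

lemma GC_neg (N : ℕ) (C : Finset ℕ) (m : ℤ) :
    GC N C (-m) = (starRingEnd ℂ) (GC N C m) := by
  unfold GC
  rw [_root_.map_sum]
  refine Finset.sum_congr rfl fun x _ => ?_
  rw [eN_conj]
  ring_nf

lemma PhiC_neg (N : ℕ) (C : Finset ℕ) (m : ℤ) : PhiC N C (-m) = PhiC N C m := by
  unfold PhiC
  rw [GC_neg]
  exact Complex.normSq_conj _

lemma PhiC_expand (N : ℕ) (C : Finset ℕ) (m : ℤ) :
    (PhiC N C m : ℂ) = ∑ c1 ∈ C, ∑ c2 ∈ C, eN N (m * ((c1 : ℤ) - (c2 : ℤ))) := by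
  have h1 : (PhiC N C m : ℂ) = GC N C m * (starRingEnd ℂ) (GC N C m) := by
    rw [Complex.mul_conj]; norm_cast
  rw [h1, ← GC_neg]
  unfold GC
  rw [Finset.sum_mul_sum]
  refine Finset.sum_congr rfl fun x _ => Finset.sum_congr rfl fun y _ => ?_
  have : m * ((x:ℤ) - y) = m * x + (-m) * y := by ring
  rw [this, eN_add]

/-- The key "unshifting" inequality. -/
lemma key_ineq (N : ℕ) (C : Finset ℕ) (χ : Fin N → ℝ) (hχ : ∀ x, χ x = 0 ∨ χ x = 1)
    (β : ℤ) :
    ∑ c1 ∈ C, ∑ c2 ∈ C, Phi N χ ((c1:ℤ) - (c2:ℤ) + β)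
      ≤ ∑ x : Fin N, ∑ y : Fin N, χ x * χ y * PhiC N C ((x:ℤ) - (y:ℤ)) := by
  have hχ0 : ∀ x, 0 ≤ χ x := by
    intro x; rcases hχ x with h | h <;> rw [h] <;> norm_num
  have hid : (↑(∑ c1 ∈ C, ∑ c2 ∈ C, Phi N χ ((c1:ℤ) - (c2:ℤ) + β)) : ℂ)
      = ∑ x : Fin N, ∑ y : Fin N,
          (χ x : ℂ) * (χ y : ℂ) * eN N (β * ((x:ℤ) - (y:ℤ))) *
            (PhiC N C ((x:ℤ) - (y:ℤ)) : ℂ) := by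
    push_cast
    calc ∑ c1 ∈ C, ∑ c2 ∈ C, (Phi N χ ((c1:ℤ) - (c2:ℤ) + β) : ℂ)
        = ∑ c1 ∈ C, ∑ c2 ∈ C, ∑ x : Fin N, ∑ y : Fin N,
            (χ x : ℂ) * (χ y : ℂ) * eN N (((c1:ℤ) - (c2:ℤ) + β) * ((x:ℤ) - (y:ℤ))) := by
          refine Finset.sum_congr rfl fun c1 _ => Finset.sum_congr rfl fun c2 _ => ?_
          exact Phi_expand N χ _
      _ = ∑ c1 ∈ C, ∑ x : Fin N, ∑ c2 ∈ C, ∑ y : Fin N,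
            (χ x : ℂ) * (χ y : ℂ) * eN N (((c1:ℤ) - (c2:ℤ) + β) * ((x:ℤ) - (y:ℤ))) := by
          exact Finset.sum_congr rfl fun c1 _ => Finset.sum_comm
      _ = ∑ x : Fin N, ∑ c1 ∈ C, ∑ c2 ∈ C, ∑ y : Fin N,
            (χ x : ℂ) * (χ y : ℂ) * eN N (((c1:ℤ) - (c2:ℤ) + β) * ((x:ℤ) - (y:ℤ))) :=
          Finset.sum_comm
      _ = ∑ x : Fin N, ∑ c1 ∈ C, ∑ y : Fin N, ∑ c2 ∈ C,
            (χ x : ℂ) * (χ y : ℂ) * eN N (((c1:ℤ) - (c2:ℤ) + β) * ((x:ℤ) - (y:ℤ))) := by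
          exact Finset.sum_congr rfl fun x _ => Finset.sum_congr rfl fun c1 _ => Finset.sum_comm
      _ = ∑ x : Fin N, ∑ y : Fin N, ∑ c1 ∈ C, ∑ c2 ∈ C,
            (χ x : ℂ) * (χ y : ℂ) * eN N (((c1:ℤ) - (c2:ℤ) + β) * ((x:ℤ) - (y:ℤ))) := by
          exact Finset.sum_congr rfl fun x _ => Finset.sum_comm
      _ = ∑ x : Fin N, ∑ y : Fin N,
            (χ x : ℂ) * (χ y : ℂ) * eN N (β * ((x:ℤ) - (y:ℤ))) *
              (PhiC N C ((x:ℤ) - (y:ℤ)) : ℂ) := by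
          refine Finset.sum_congr rfl fun x _ => Finset.sum_congr rfl fun y _ => ?_
          rw [PhiC_expand]
          simp only [Finset.mul_sum]
          refine Finset.sum_congr rfl fun c1 _ => ?_
          refine Finset.sum_congr rfl fun c2 _ => ?_
          have : ((c1:ℤ) - (c2:ℤ) + β) * ((x:ℤ) - (y:ℤ))
              = β * ((x:ℤ) - (y:ℤ)) + ((x:ℤ) - (y:ℤ)) * ((c1:ℤ) - (c2:ℤ)) := by ring
          rw [this, eN_add]
          ring
  have hre : ∑ c1 ∈ C, ∑ c2 ∈ C, Phi N χ ((c1:ℤ) - (c2:ℤ) + β)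
      = (∑ x : Fin N, ∑ y : Fin N,
          (χ x : ℂ) * (χ y : ℂ) * eN N (β * ((x:ℤ) - (y:ℤ))) *
            (PhiC N C ((x:ℤ) - (y:ℤ)) : ℂ)).re := by
    rw [← hid, Complex.ofReal_re]
  rw [hre, Complex.re_sum]
  refine Finset.sum_le_sum fun x _ => ?_
  rw [Complex.re_sum]
  refine Finset.sum_le_sum fun y _ => ?_
  calc ((χ x : ℂ) * (χ y : ℂ) * eN N (β * ((x:ℤ) - (y:ℤ))) *
          (PhiC N C ((x:ℤ) - (y:ℤ)) : ℂ)).re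
      ≤ ‖(χ x : ℂ) * (χ y : ℂ) * eN N (β * ((x:ℤ) - (y:ℤ))) *
          (PhiC N C ((x:ℤ) - (y:ℤ)) : ℂ)‖ := Complex.re_le_norm _
    _ = χ x * χ y * PhiC N C ((x:ℤ) - (y:ℤ)) := by
        rw [norm_mul, norm_mul, norm_mul, eN_norm]
        simp only [Complex.norm_real, Real.norm_eq_abs]
        rw [_root_.abs_of_nonneg (hχ0 x), _root_.abs_of_nonneg (hχ0 y),
          _root_.abs_of_nonneg (PhiC_nonneg N C _)]
        ring

open scoped Classical in
/-- Covering lemma: sum of a nonneg `N`-periodic function over a set covered by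
translates of `C` is at most the sum over all translates. -/
lemma cover_ineq (N : ℕ) (hN : 0 < N) (C : Finset ℕ) (I : Finset ℤ) (X : Set (Fin N))
    (hX : ∀ a ∈ X, ∃ c ∈ C, ∃ s ∈ I, (a.val : ℤ) ≡ (c : ℤ) + s [ZMOD (N:ℤ)])
    (g : ℤ → ℝ) (hg0 : ∀ m, 0 ≤ g m)
    (hgp : ∀ a b : ℤ, a ≡ b [ZMOD (N:ℤ)] → g a = g b) :
    ∑ a : Fin N, (X.indicator (fun _ => (1:ℝ)) a) * g (a : ℤ)
      ≤ ∑ c ∈ C, ∑ s ∈ I, g ((c : ℤ) + s) := by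
  classical
  have h1 : ∑ a : Fin N, (X.indicator (fun _ => (1:ℝ)) a) * g (a : ℤ)
      = ∑ a ∈ Finset.univ.filter (fun a : Fin N => a ∈ X), g (a : ℤ) := by
    rw [Finset.sum_filter]
    refine Finset.sum_congr rfl fun a _ => ?_
    by_cases h : a ∈ X <;> simp [Set.indicator_apply, h]
  rw [h1]
  set XF := Finset.univ.filter (fun a : Fin N => a ∈ X) with hXF
  -- choice of representation
  have hrep : ∀ a ∈ XF,
      ∃ p : ℕ × ℤ, p.1 ∈ C ∧ p.2 ∈ I ∧ (a.val : ℤ) ≡ (p.1 : ℤ) + p.2 [ZMOD (N:ℤ)] := by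
    intro a ha
    obtain ⟨c, hc, s, hs, hmod⟩ := hX a (Finset.mem_filter.mp (hXF ▸ ha)).2
    exact ⟨(c, s), hc, hs, hmod⟩
  choose F hF1 hF2 hF3 using hrep
  let ι : Fin N → ℕ × ℤ := fun a => if h : a ∈ XF then F a h else (0, 0)
  have hval : ∀ a : Fin N, a ∈ XF → (a.val : ℤ) ≡ ((ι a).1 : ℤ) + (ι a).2 [ZMOD (N:ℤ)] := by
    intro a ha
    simp only [ι, dif_pos ha]
    exact hF3 a ha
  have hinj : Set.InjOn ι XF := by
    intro a ha b hb hab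
    have h1 := hval a ha
    have h2 := hval b hb
    rw [hab] at h1
    have h3 : (a.val : ℤ) ≡ (b.val : ℤ) [ZMOD (N:ℤ)] := h1.trans h2.symm
    have h4 : (a.val : ℤ) % (N:ℤ) = (b.val : ℤ) % (N:ℤ) := h3
    have ha' : (a.val : ℤ) % (N:ℤ) = a.val := Int.emod_eq_of_lt (by positivity) (by exact_mod_cast a.isLt)
    have hb' : (b.val : ℤ) % (N:ℤ) = b.val := Int.emod_eq_of_lt (by positivity) (by exact_mod_cast b.isLt)
    have : (a.val : ℤ) = b.val := by rw [← ha', ← hb', h4]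
    exact Fin.ext (by exact_mod_cast this)
  have key : ∑ a ∈ XF, g (a : ℤ) ≤ ∑ p ∈ C ×ˢ I, g ((p.1 : ℤ) + p.2) := by
    have h2 : ∑ a ∈ XF, g (a : ℤ) = ∑ p ∈ XF.image ι, g ((p.1 : ℤ) + p.2) := by
      rw [Finset.sum_image (fun a ha b hb hab => hinj ha hb hab)]
      exact Finset.sum_congr rfl fun a ha => hgp _ _ (hval a ha)
    rw [h2]
    refine Finset.sum_le_sum_of_subset_of_nonneg ?_ (fun p _ _ => hg0 _)
    intro p hp
    obtain ⟨a, ha, rfl⟩ := Finset.mem_image.mp hp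
    have h1 : (ι a).1 ∈ C := by simp only [ι, dif_pos ha]; exact hF1 a ha
    have h2 : (ι a).2 ∈ I := by simp only [ι, dif_pos ha]; exact hF2 a ha
    exact Finset.mem_product.mpr ⟨h1, h2⟩
  calc _ ≤ ∑ p ∈ C ×ˢ I, g ((p.1 : ℤ) + p.2) := key
    _ = ∑ c ∈ C, ∑ s ∈ I, g ((c : ℤ) + s) := Finset.sum_product _ _ _

lemma dft_conj_mul (N : ℕ) (hN : 0 < N) (c a b : Fin N) :
    (starRingEnd ℂ) (dftEnt N c a) * dftEnt N c b
      = ((1/(N:ℝ) : ℝ) : ℂ) * eN N (((a:ℤ) - (b:ℤ)) * (c:ℤ)) := by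
  have hd : ∀ j l : Fin N, dftEnt N j l = ((1/Real.sqrt N : ℝ) : ℂ) * eN N (-((j:ℤ) * (l:ℤ))) := by
    intro j l
    rw [dftEnt, eN]
    congr 1
    push_cast
    ring
  rw [hd, hd, _root_.map_mul, eN_conj, neg_neg, Complex.conj_ofReal]
  have hsq : ((1/Real.sqrt N : ℝ) : ℂ) * ((1/Real.sqrt N : ℝ) : ℂ) = ((1/(N:ℝ) : ℝ) : ℂ) := by
    rw [← Complex.ofReal_mul]
    congr 1
    rw [div_mul_div_comm, one_mul, Real.mul_self_sqrt (Nat.cast_nonneg N)]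
  have harg : ((c:ℤ) * (a:ℤ)) + -((c:ℤ) * (b:ℤ)) = ((a:ℤ) - (b:ℤ)) * (c:ℤ) := by ring
  calc ((1/Real.sqrt N : ℝ) : ℂ) * eN N ((c:ℤ) * (a:ℤ)) *
        (((1/Real.sqrt N : ℝ) : ℂ) * eN N (-((c:ℤ) * (b:ℤ))))
      = (((1/Real.sqrt N : ℝ) : ℂ) * ((1/Real.sqrt N : ℝ) : ℂ)) *
        (eN N ((c:ℤ) * (a:ℤ)) * eN N (-((c:ℤ) * (b:ℤ)))) := by ring
    _ = ((1/(N:ℝ) : ℝ) : ℂ) * eN N (((a:ℤ) - (b:ℤ)) * (c:ℤ)) := by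
        rw [hsq, ← eN_add, harg]

lemma trace_expand (N : ℕ) (hN : 0 < N) (X : Set (Fin N)) :
    (Matrix.trace (((Matrix.diagonal (X.indicator fun _ => (1:ℂ)) * dftM N *
        Matrix.diagonal (X.indicator fun _ => (1:ℂ)))ᴴ *
      (Matrix.diagonal (X.indicator fun _ => (1:ℂ)) * dftM N *
        Matrix.diagonal (X.indicator fun _ => (1:ℂ)))) ^ 2)).re
    = (1/(N:ℝ))^2 * ∑ a : Fin N, ∑ b : Fin N,
        (X.indicator (fun _ => (1:ℝ)) a) * (X.indicator (fun _ => (1:ℝ)) b) *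
          Phi N (X.indicator fun _ => (1:ℝ)) ((a:ℤ) - (b:ℤ)) := by
  classical
  set w : Fin N → ℂ := X.indicator fun _ => (1:ℂ) with hw
  set χ : Fin N → ℝ := X.indicator fun _ => (1:ℝ) with hχ
  have hwχ : ∀ a, w a = ((χ a : ℝ) : ℂ) := by
    intro a; by_cases h : a ∈ X <;> simp [hw, hχ, Set.indicator_apply, h]
  have hidem : ∀ a, w a * w a = w a := by
    intro a; by_cases h : a ∈ X <;> simp [hw, Set.indicator_apply, h]
  have hconj : ∀ a, (starRingEnd ℂ) (w a) = w a := by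
    intro a; by_cases h : a ∈ X <;> simp [hw, Set.indicator_apply, h]
  set T : Matrix (Fin N) (Fin N) ℂ := Matrix.diagonal w * dftM N * Matrix.diagonal w with hT
  have hTab : ∀ a b, T a b = w a * dftEnt N a b * w b := by
    intro a b
    rw [hT, Matrix.mul_diagonal, Matrix.diagonal_mul]
    rfl
  set S : Matrix (Fin N) (Fin N) ℂ := Tᴴ * T with hS
  have hSab : ∀ a b, S a b = w a * w b * ((1/(N:ℝ) : ℝ) : ℂ) * GG N χ ((a:ℤ) - (b:ℤ)) := by
    intro a b
    rw [hS, Matrix.mul_apply]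
    have : ∀ c, Tᴴ a c * T c b
        = w a * w b * (((1/(N:ℝ) : ℝ) : ℂ) * ((χ c : ℝ) : ℂ) * eN N (((a:ℤ) - (b:ℤ)) * (c:ℤ))) := by
      intro c
      rw [Matrix.conjTranspose_apply, hTab, hTab]
      simp only [star_mul', RCLike.star_def, hconj]
      calc w c * (starRingEnd ℂ) (dftEnt N c a) * w a * (w c * dftEnt N c b * w b)
          = (w c * w c) * w a * w b *
              ((starRingEnd ℂ) (dftEnt N c a) * dftEnt N c b) := by ring
        _ = w c * w a * w b * (((1/(N:ℝ) : ℝ) : ℂ) * eN N (((a:ℤ) - (b:ℤ)) * (c:ℤ))) := by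
            rw [hidem, dft_conj_mul N hN]
        _ = w a * w b * (((1/(N:ℝ) : ℝ) : ℂ) * ((χ c : ℝ) : ℂ) * eN N (((a:ℤ) - (b:ℤ)) * (c:ℤ))) := by
            rw [hwχ c]; ring
    rw [Finset.sum_congr rfl fun c _ => this c]
    rw [← Finset.mul_sum]
    rw [GG]
    have h2 : ∀ c : Fin N, ((1/(N:ℝ) : ℝ) : ℂ) * ((χ c : ℝ) : ℂ) * eN N (((a:ℤ) - (b:ℤ)) * (c:ℤ))
        = ((1/(N:ℝ) : ℝ) : ℂ) * (((χ c : ℝ) : ℂ) * eN N (((a:ℤ) - (b:ℤ)) * (c:ℤ))) :=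
      fun c => by ring
    rw [Finset.sum_congr rfl fun c _ => h2 c, ← Finset.mul_sum]
    ring
  have htr : Matrix.trace (S ^ 2) = ∑ a : Fin N, ∑ b : Fin N, S a b * S b a := by
    rw [pow_two, Matrix.trace]
    refine Finset.sum_congr rfl fun a _ => ?_
    rw [Matrix.diag_apply, Matrix.mul_apply]
  have hterm : ∀ a b : Fin N, S a b * S b a
      = (((χ a) * (χ b) * (1/(N:ℝ))^2 * Phi N χ ((a:ℤ) - (b:ℤ)) : ℝ) : ℂ) := by
    intro a b
    rw [hSab, hSab]
    have hGG : GG N χ ((b:ℤ) - (a:ℤ)) = (starRingEnd ℂ) (GG N χ ((a:ℤ) - (b:ℤ))) := by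
      rw [← GG_neg]; congr 1; ring
    rw [hGG]
    have : w a * w b * ((1/(N:ℝ) : ℝ) : ℂ) * GG N χ ((a:ℤ) - (b:ℤ)) *
        (w b * w a * ((1/(N:ℝ) : ℝ) : ℂ) * (starRingEnd ℂ) (GG N χ ((a:ℤ) - (b:ℤ))))
        = (w a * w a) * (w b * w b) * (((1/(N:ℝ) : ℝ) : ℂ) * ((1/(N:ℝ) : ℝ) : ℂ)) *
          (GG N χ ((a:ℤ) - (b:ℤ)) * (starRingEnd ℂ) (GG N χ ((a:ℤ) - (b:ℤ)))) := by ring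
    rw [this, hidem, hidem, Complex.mul_conj, hwχ, hwχ]
    rw [Phi]
    push_cast
    ring
  rw [htr]
  rw [Finset.sum_congr rfl fun a _ => Finset.sum_congr rfl fun b _ => hterm a b]
  rw [Complex.re_sum]
  rw [Finset.sum_congr rfl fun a _ => Complex.re_sum _ _]
  rw [Finset.mul_sum]
  refine Finset.sum_congr rfl fun a _ => ?_
  rw [Finset.mul_sum]
  refine Finset.sum_congr rfl fun b _ => ?_
  rw [Complex.ofReal_re]
  ring


lemma Ck_lt (M : ℕ) (hM : 1 ≤ M) (A : Finset ℕ) (hA : A ⊆ Finset.range M) (k : ℕ) :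
    ∀ c ∈ Ck M A k, c < M ^ k := by
  intro c hc
  obtain ⟨a, ha, rfl⟩ := Finset.mem_image.mp hc
  have ha' : ∀ j, a j < M := fun j =>
    Finset.mem_range.mp (hA (Fintype.mem_piFinset.mp ha j))
  clear hc ha hA
  induction k with
  | zero => simpa using Nat.one_le_iff_ne_zero.mp (by positivity)
  | succ n ih =>
      rw [Fin.sum_univ_succ]
      have h1 : ∑ j : Fin n, a j.succ * M ^ ((j.succ : ℕ)) = M * ∑ j : Fin n, a j.succ * M ^ (j:ℕ) := by
        rw [Finset.mul_sum]
        refine Finset.sum_congr rfl fun j _ => ?_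
        rw [Fin.val_succ, pow_succ]
        ring
      rw [h1]
      have h2 : (∑ j : Fin n, a j.succ * M ^ (j:ℕ)) < M ^ n := ih _ (fun j => ha' j.succ)
      have h3 : a 0 * M ^ ((0:Fin (n+1)) : ℕ) = a 0 := by simp
      rw [h3]
      calc a 0 + M * ∑ j : Fin n, a j.succ * M ^ (j:ℕ)
          < M + M * ∑ j : Fin n, a j.succ * M ^ (j:ℕ) := by
            exact Nat.add_lt_add_right (ha' 0) _
        _ = M * (∑ j : Fin n, a j.succ * M ^ (j:ℕ) + 1) := by ring
        _ ≤ M * M ^ n := Nat.mul_le_mul_left M (Nat.succ_le_of_lt h2)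
        _ = M ^ (n+1) := by ring

lemma dftInd_normSq (N : ℕ) (hN : 0 < N) (C : Finset ℕ) (hC : ∀ c ∈ C, c < N) (m : ℕ) :
    ‖dftInd N C m‖ ^ 2 = (1/(N:ℝ)) * PhiC N C (-(m:ℤ)) := by
  have hsum : ∑ l ∈ Finset.range N, (if l ∈ C then (1 : ℂ) else 0) *
      Complex.exp (-(2 * (Real.pi : ℂ) * Complex.I * m * l) / N) = GC N C (-(m:ℤ)) := by
    rw [GC]
    rw [Finset.sum_congr rfl (fun l (_ : l ∈ Finset.range N) =>
      (ite_mul (l ∈ C) (1:ℂ) 0 _).trans (by rw [one_mul, zero_mul]))]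
    rw [← Finset.sum_filter]
    have hfil : (Finset.range N).filter (fun l => l ∈ C) = C := by
      ext l
      simp only [Finset.mem_filter, Finset.mem_range]
      exact ⟨fun h => h.2, fun h => ⟨hC l h, h⟩⟩
    rw [hfil]
    refine Finset.sum_congr rfl fun c _ => ?_
    rw [eN]
    congr 1
    push_cast
    ring
  rw [dftInd, hsum]
  rw [norm_mul, Complex.norm_real, Real.norm_eq_abs]
  have h1 : |((1:ℝ)/Real.sqrt N)| = 1/Real.sqrt N := by
    rw [_root_.abs_of_nonneg]; positivity
  rw [h1, mul_pow]
  have h2 : ((1:ℝ)/Real.sqrt N) ^ 2 = 1/(N:ℝ) := by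
    rw [div_pow, one_pow, Real.sq_sqrt (Nat.cast_nonneg N)]
  rw [h2]
  congr 1
  rw [PhiC, ← Complex.sq_norm]

lemma tk_eq (M : ℕ) (hM : 2 ≤ M) (A : Finset ℕ) (hA : A ⊆ Finset.range M) (k : ℕ) :
    tk M A k = (1/((M^k : ℕ):ℝ))^2 * ∑ x : Fin (M^k), ∑ y : Fin (M^k),
      (if (x:ℕ) ∈ Ck M A k then (1:ℝ) else 0) * (if (y:ℕ) ∈ Ck M A k then (1:ℝ) else 0) *
        PhiC (M^k) (Ck M A k) ((x:ℤ) - (y:ℤ)) := by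
  set N := M^k with hNdef
  have hN : 0 < N := pow_pos (by omega : 0 < M) k |>.trans_le (le_refl _)
  have hC : ∀ c ∈ Ck M A k, c < N := Ck_lt M (by omega) A hA k
  rw [tk]
  have hterm : ∀ j ∈ Finset.range N, ∀ l ∈ Finset.range N,
      (if j ∈ Ck M A k then (1 : ℝ) else 0) * (if l ∈ Ck M A k then (1 : ℝ) else 0) *
        ‖dftInd N (Ck M A k) (l + N - j)‖ ^ 2
      = (1/(N:ℝ)) * ((if j ∈ Ck M A k then (1 : ℝ) else 0) * (if l ∈ Ck M A k then (1 : ℝ) else 0) *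
          PhiC N (Ck M A k) ((j:ℤ) - (l:ℤ))) := by
    intro j hj l hl
    have hj' : j < N := Finset.mem_range.mp hj
    rw [dftInd_normSq N hN (Ck M A k) hC]
    have hcast : ((l + N - j : ℕ) : ℤ) = (l:ℤ) + N - j := by
      have : j ≤ l + N := by omega
      omega
    have hmod : (-(((l + N - j : ℕ)) : ℤ)) ≡ (j:ℤ) - (l:ℤ) [ZMOD (N:ℤ)] := by
      rw [hcast]
      have h5 : -((l:ℤ) + N - j) - ((j:ℤ) - (l:ℤ)) = -N := by ring
      exact (Int.modEq_iff_dvd.mpr (by rw [h5]; exact ⟨-1, by ring⟩)).symm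
    rw [PhiC_congr N hN _ hmod]
    ring
  rw [Finset.sum_congr rfl fun j hj => Finset.sum_congr rfl fun l hl => hterm j hj l hl]
  have hre : ∀ (f : ℕ → ℝ), ∑ i ∈ Finset.range N, f i = ∑ i : Fin N, f (i : ℕ) :=
    fun f => (Fin.sum_univ_eq_sum_range f N).symm
  rw [hre]
  rw [Finset.sum_congr rfl fun x (_ : x ∈ Finset.univ) => hre _]
  rw [← Finset.sum_congr rfl fun x (_ : x ∈ (Finset.univ : Finset (Fin N))) => rfl]
  simp only [← Finset.mul_sum]
  ring

set_option maxHeartbeats 2000000 in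
/-- For fixed `ρ ∈ (0,1)` there is `C > 0`, independent of `k`, such that
`tr((T*T)²) ≤ C · N^{4(1-ρ)} · t_k` for all `k ≥ 1`, where `T = 1_{X_ρ} F_N 1_{X_ρ}`.
(The trace is real; we state the bound for its real part.) -/
theorem stmt2 (M : ℕ) (hM : 2 ≤ M) (A : Finset ℕ) (hA : A ⊆ Finset.range M)
    (ρ : ℝ) (hρ : ρ ∈ Set.Ioo (0 : ℝ) 1) :
    ∃ C : ℝ, 0 < C ∧ ∀ k : ℕ, 1 ≤ k →
      (Matrix.trace (((Topk M A ρ k)ᴴ * Topk M A ρ k) ^ 2)).re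
        ≤ C * ((M ^ k : ℕ) : ℝ) ^ (4 * (1 - ρ)) * tk M A k := by
  classical
  refine ⟨625, by norm_num, fun k hk => ?_⟩
  set N := M ^ k with hNdef
  have hN : 0 < N := pow_pos (by omega : 0 < M) k
  have hN2 : (2:ℕ) ≤ N := by
    calc (2:ℕ) ≤ M := hM
    _ = M^1 := (pow_one M).symm
    _ ≤ M^k := Nat.pow_le_pow_right (by omega) hk
  set C := Ck M A k with hCdef
  set X := Xrho M A ρ k with hXdef
  set χ : Fin N → ℝ := X.indicator fun _ => (1:ℝ) with hχdef
  have hχ01 : ∀ x, χ x = 0 ∨ χ x = 1 := by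
    intro x; by_cases h : x ∈ X
    · right; simp [hχdef, Set.indicator_apply, h]
    · left; simp [hχdef, Set.indicator_apply, h]
  have hχ0 : ∀ x, 0 ≤ χ x := by
    intro x; rcases hχ01 x with h | h <;> rw [h] <;> norm_num
  set χC : Fin N → ℝ := fun x => if (x:ℕ) ∈ C then (1:ℝ) else 0 with hχCdef
  have hχC01 : ∀ x, χC x = 0 ∨ χC x = 1 := by
    intro x; by_cases h : (x:ℕ) ∈ C
    · right; simp [hχCdef, h]
    · left; simp [hχCdef, h]
  have hχC0 : ∀ x, 0 ≤ χC x := by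
    intro x; rcases hχC01 x with h | h <;> rw [h] <;> norm_num
  set L : ℕ := ⌊2 * (N:ℝ) ^ (1 - ρ)⌋₊ with hLdef
  set I : Finset ℤ := Finset.Icc (-(L:ℤ)) (L:ℤ) with hIdef
  have h0I : (0:ℤ) ∈ I := by
    rw [hIdef, Finset.mem_Icc]
    constructor <;> [exact neg_nonpos.mpr (Int.ofNat_nonneg L); exact Int.ofNat_nonneg L]
  -- membership data for X
  have hXmem : ∀ a ∈ X, ∃ c ∈ C, ∃ s ∈ I, (a.val : ℤ) ≡ (c : ℤ) + s [ZMOD (N:ℤ)] := by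
    intro a ha
    obtain ⟨c, hc, m, hm, hmod⟩ := ha
    refine ⟨c, hc, m, ?_, hmod⟩
    rw [hIdef, Finset.mem_Icc, ← abs_le]
    have : (m.natAbs : ℕ) ≤ L := by
      rw [hLdef]
      apply Nat.le_floor
      rw [Nat.cast_natAbs]
      exact_mod_cast hm
    calc |m| = (m.natAbs : ℤ) := (Int.abs_eq_natAbs m)
      _ ≤ (L:ℤ) := by exact_mod_cast this
  -- membership data for the Fin-version of C
  set XC : Set (Fin N) := {x : Fin N | (x:ℕ) ∈ C} with hXCdef
  have hXCind : ∀ x, XC.indicator (fun _ => (1:ℝ)) x = χC x := by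
    intro x
    by_cases h : (x:ℕ) ∈ C <;> simp [hXCdef, hχCdef, Set.indicator_apply, h]
  have hXCmem : ∀ a ∈ XC, ∃ c ∈ C, ∃ s ∈ I, (a.val : ℤ) ≡ (c : ℤ) + s [ZMOD (N:ℤ)] := by
    intro a ha
    exact ⟨(a:ℕ), ha, 0, h0I, by simp [Int.ModEq.refl]⟩
  -- identification of Phi for the indicator of C with PhiC
  have hGGC : ∀ m : ℤ, GG N χC m = GC N C m := by
    intro m
    rw [GG, GC]
    have h1 : ∀ x : Fin N, ((χC x : ℝ) : ℂ) * eN N (m * (x:ℤ))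
        = if (x:ℕ) ∈ C then eN N (m * (x:ℤ)) else 0 := by
      intro x
      by_cases h : (x:ℕ) ∈ C <;> simp [hχCdef, h]
    rw [Finset.sum_congr rfl fun x _ => h1 x]
    rw [Fin.sum_univ_eq_sum_range (fun i => if i ∈ C then eN N (m * (i:ℤ)) else 0) N]
    rw [← Finset.sum_filter]
    have hfil : (Finset.range N).filter (fun l => l ∈ C) = C := by
      ext l
      simp only [Finset.mem_filter, Finset.mem_range]
      exact ⟨fun h => h.2, fun h => ⟨Ck_lt M (by omega) A hA k l h, h⟩⟩
    rw [hfil]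
  have hPhiC : ∀ m : ℤ, Phi N χC m = PhiC N C m := by
    intro m; rw [Phi, PhiC, hGGC]
  -- Step 0: trace formula
  have step0 : (Matrix.trace (((Topk M A ρ k)ᴴ * Topk M A ρ k) ^ 2)).re
      = (1/(N:ℝ))^2 * ∑ a : Fin N, ∑ b : Fin N, χ a * χ b * Phi N χ ((a:ℤ) - (b:ℤ)) := by
    rw [Topk]
    exact trace_expand N hN X
  -- generic covering estimate in both variables
  have cover2 : ∀ (Y : Set (Fin N)),
      (∀ a ∈ Y, ∃ c ∈ C, ∃ s ∈ I, (a.val : ℤ) ≡ (c : ℤ) + s [ZMOD (N:ℤ)]) →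
      ∀ (ψ : Fin N → ℝ), (ψ = Y.indicator fun _ => (1:ℝ)) →
      ∀ (F : ℤ → ℝ), (∀ m, 0 ≤ F m) → (∀ a b : ℤ, a ≡ b [ZMOD (N:ℤ)] → F a = F b) →
      ∑ a : Fin N, ∑ b : Fin N, ψ a * ψ b * F ((a:ℤ) - (b:ℤ))
        ≤ ∑ s1 ∈ I, ∑ s2 ∈ I, ∑ c1 ∈ C, ∑ c2 ∈ C, F ((c1:ℤ) - (c2:ℤ) + (s1 - s2)) := by
    intro Y hY ψ hψ F hF0 hFp
    have hψ0 : ∀ x, 0 ≤ ψ x := by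
      intro x; rw [hψ]; by_cases h : x ∈ Y <;> simp [Set.indicator_apply, h]
    -- inner covering: for each a
    have inner : ∀ t : ℤ, ∑ b : Fin N, ψ b * F (t - (b:ℤ))
        ≤ ∑ c2 ∈ C, ∑ s2 ∈ I, F (t - ((c2:ℤ) + s2)) := by
      intro t
      have := cover_ineq N hN C I Y hY (fun u => F (t - u)) (fun u => hF0 _)
        (fun a b hab => hFp _ _ (Int.ModEq.sub (Int.ModEq.refl t) hab))
      rw [hψ]
      exact this
    have outer : ∑ a : Fin N, ∑ b : Fin N, ψ a * ψ b * F ((a:ℤ) - (b:ℤ))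
        ≤ ∑ c1 ∈ C, ∑ s1 ∈ I, ∑ c2 ∈ C, ∑ s2 ∈ I, F (((c1:ℤ) + s1) - ((c2:ℤ) + s2)) := by
      have h1 : ∑ a : Fin N, ∑ b : Fin N, ψ a * ψ b * F ((a:ℤ) - (b:ℤ))
          = ∑ a : Fin N, (Y.indicator (fun _ => (1:ℝ)) a) *
              (∑ b : Fin N, ψ b * F ((a:ℤ) - (b:ℤ))) := by
        refine Finset.sum_congr rfl fun a _ => ?_
        rw [← hψ, Finset.mul_sum]
        refine Finset.sum_congr rfl fun b _ => by ring
      rw [h1]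
      have h2 := cover_ineq N hN C I Y hY (fun t => ∑ b : Fin N, ψ b * F (t - (b:ℤ)))
        (fun t => Finset.sum_nonneg fun b _ => mul_nonneg (hψ0 b) (hF0 _))
        (fun a b hab => Finset.sum_congr rfl fun x _ =>
          by rw [hFp _ _ (Int.ModEq.sub hab (Int.ModEq.refl (x:ℤ)))])
      refine h2.trans ?_
      refine Finset.sum_le_sum fun c1 _ => Finset.sum_le_sum fun s1 _ => ?_
      exact inner ((c1:ℤ) + s1)
    refine outer.trans (le_of_eq ?_)
    -- reorder sums и fix the argument
    calc ∑ c1 ∈ C, ∑ s1 ∈ I, ∑ c2 ∈ C, ∑ s2 ∈ I, F (((c1:ℤ) + s1) - ((c2:ℤ) + s2))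
        = ∑ s1 ∈ I, ∑ c1 ∈ C, ∑ c2 ∈ C, ∑ s2 ∈ I, F (((c1:ℤ) + s1) - ((c2:ℤ) + s2)) :=
          Finset.sum_comm
      _ = ∑ s1 ∈ I, ∑ c1 ∈ C, ∑ s2 ∈ I, ∑ c2 ∈ C, F (((c1:ℤ) + s1) - ((c2:ℤ) + s2)) :=
          Finset.sum_congr rfl fun s1 _ => Finset.sum_congr rfl fun c1 _ => Finset.sum_comm
      _ = ∑ s1 ∈ I, ∑ s2 ∈ I, ∑ c1 ∈ C, ∑ c2 ∈ C, F (((c1:ℤ) + s1) - ((c2:ℤ) + s2)) :=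
          Finset.sum_congr rfl fun s1 _ => Finset.sum_comm
      _ = ∑ s1 ∈ I, ∑ s2 ∈ I, ∑ c1 ∈ C, ∑ c2 ∈ C, F ((c1:ℤ) - (c2:ℤ) + (s1 - s2)) := by
          refine Finset.sum_congr rfl fun s1 _ => Finset.sum_congr rfl fun s2 _ =>
            Finset.sum_congr rfl fun c1 _ => Finset.sum_congr rfl fun c2 _ => ?_
          congr 1
          ring
  -- final quantity
  set Sfin : ℝ := ∑ x : Fin N, ∑ y : Fin N, χC x * χC y * PhiC N C ((x:ℤ) - (y:ℤ)) with hSfin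
  have hSfin0 : 0 ≤ Sfin := by
    rw [hSfin]
    refine Finset.sum_nonneg fun x _ => Finset.sum_nonneg fun y _ =>
      mul_nonneg (mul_nonneg (hχC0 x) (hχC0 y)) (PhiC_nonneg N C _)
  -- chain of estimates
  have chain : ∑ a : Fin N, ∑ b : Fin N, χ a * χ b * Phi N χ ((a:ℤ) - (b:ℤ))
      ≤ (I.card : ℝ)^4 * Sfin := by
    have s1 := cover2 X hXmem χ hχdef (Phi N χ) (Phi_nonneg N χ)
      (fun a b hab => Phi_congr N hN χ hab)
    have s2 : ∀ β : ℤ, ∑ c1 ∈ C, ∑ c2 ∈ C, Phi N χ ((c1:ℤ) - (c2:ℤ) + β)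
        ≤ ∑ x : Fin N, ∑ y : Fin N, χ x * χ y * PhiC N C ((x:ℤ) - (y:ℤ)) :=
      fun β => key_ineq N C χ hχ01 β
    have s3 := cover2 X hXmem χ hχdef (PhiC N C) (PhiC_nonneg N C)
      (fun a b hab => PhiC_congr N hN C hab)
    have s4 : ∀ β : ℤ, ∑ c1 ∈ C, ∑ c2 ∈ C, PhiC N C ((c1:ℤ) - (c2:ℤ) + β) ≤ Sfin := by
      intro β
      have h := key_ineq N C χC hχC01 β
      have heq : ∑ c1 ∈ C, ∑ c2 ∈ C, PhiC N C ((c1:ℤ) - (c2:ℤ) + β)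
          = ∑ c1 ∈ C, ∑ c2 ∈ C, Phi N χC ((c1:ℤ) - (c2:ℤ) + β) :=
        Finset.sum_congr rfl fun c1 _ => Finset.sum_congr rfl fun c2 _ => (hPhiC _).symm
      rw [heq]
      exact h
    calc ∑ a : Fin N, ∑ b : Fin N, χ a * χ b * Phi N χ ((a:ℤ) - (b:ℤ))
        ≤ ∑ t1 ∈ I, ∑ t2 ∈ I, ∑ c1 ∈ C, ∑ c2 ∈ C, Phi N χ ((c1:ℤ) - (c2:ℤ) + (t1 - t2)) := s1
      _ ≤ ∑ t1 ∈ I, ∑ t2 ∈ I, (∑ x : Fin N, ∑ y : Fin N, χ x * χ y * PhiC N C ((x:ℤ) - (y:ℤ))) :=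
          Finset.sum_le_sum fun t1 _ => Finset.sum_le_sum fun t2 _ => s2 _
      _ = (I.card : ℝ)^2 * ∑ x : Fin N, ∑ y : Fin N, χ x * χ y * PhiC N C ((x:ℤ) - (y:ℤ)) := by
          rw [Finset.sum_const, Finset.sum_const, nsmul_eq_mul, nsmul_eq_mul]
          push_cast
          ring
      _ ≤ (I.card : ℝ)^2 * (∑ t1 ∈ I, ∑ t2 ∈ I, ∑ c1 ∈ C, ∑ c2 ∈ C,
            PhiC N C ((c1:ℤ) - (c2:ℤ) + (t1 - t2))) := by
          refine mul_le_mul_of_nonneg_left s3 (by positivity)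
      _ ≤ (I.card : ℝ)^2 * (∑ t1 ∈ I, ∑ t2 ∈ I, Sfin) := by
          refine mul_le_mul_of_nonneg_left ?_ (by positivity)
          exact Finset.sum_le_sum fun t1 _ => Finset.sum_le_sum fun t2 _ => s4 _
      _ = (I.card : ℝ)^4 * Sfin := by
          rw [Finset.sum_const, Finset.sum_const, nsmul_eq_mul, nsmul_eq_mul]
          push_cast
          ring
  -- cardinality bound
  have hIcard : (I.card : ℝ) ≤ 5 * (N:ℝ) ^ (1 - ρ) := by
    have h1 : I.card = 2 * L + 1 := by
      rw [hIdef, Int.card_Icc]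
      omega
    have hNr1 : (1:ℝ) ≤ (N:ℝ) ^ (1 - ρ) := by
      have hone : (1:ℝ) ≤ (N:ℝ) := by exact_mod_cast hN
      have h := Real.rpow_le_rpow_of_exponent_le hone (by linarith [hρ.2] : (0:ℝ) ≤ 1 - ρ)
      rwa [Real.rpow_zero] at h
    have hL : (L : ℝ) ≤ 2 * (N:ℝ) ^ (1 - ρ) := by
      rw [hLdef]
      exact Nat.floor_le (by positivity)
    rw [h1]
    push_cast
    linarith
  -- put it together
  have htk : tk M A k = (1/(N:ℝ))^2 * Sfin := tk_eq M hM A hA k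
  rw [step0, htk]
  have hIc0 : (0:ℝ) ≤ (I.card : ℝ) := Nat.cast_nonneg _
  have hfinal : (1/(N:ℝ))^2 * (∑ a : Fin N, ∑ b : Fin N, χ a * χ b * Phi N χ ((a:ℤ) - (b:ℤ)))
      ≤ (1/(N:ℝ))^2 * ((I.card : ℝ)^4 * Sfin) :=
    mul_le_mul_of_nonneg_left chain (by positivity)
  refine hfinal.trans ?_
  have hIpow : (I.card : ℝ)^4 ≤ 625 * (N:ℝ) ^ (4 * (1 - ρ)) := by
    have h2 : ((I.card : ℝ))^4 ≤ (5 * (N:ℝ) ^ (1 - ρ))^4 := by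
      exact pow_le_pow_left₀ hIc0 hIcard 4
    refine h2.trans (le_of_eq ?_)
    rw [mul_pow]
    have h3 : ((N:ℝ) ^ (1 - ρ))^(4:ℕ) = (N:ℝ) ^ (4 * (1 - ρ)) := by
      rw [← Real.rpow_natCast ((N:ℝ) ^ (1 - ρ)) 4, ← Real.rpow_mul (Nat.cast_nonneg N)]
      norm_num
      ring_nf
    rw [h3]
    norm_num
  calc (1/(N:ℝ))^2 * ((I.card : ℝ)^4 * Sfin)
      ≤ (1/(N:ℝ))^2 * ((625 * (N:ℝ) ^ (4 * (1 - ρ))) * Sfin) := by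
        refine mul_le_mul_of_nonneg_left (mul_le_mul_of_nonneg_right hIpow hSfin0) (by positivity)
    _ = 625 * (N:ℝ) ^ (4 * (1 - ρ)) * ((1/(N:ℝ))^2 * Sfin) := by ring
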